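/- There is no C² unit-speed curve γ : ℝ → ℝⁿ contained in the closed unit ball (‖γ(t)‖ ≤ 1 for all t) whose curvature satisfies ‖γ''(t)‖ ≤ c for all t for some constant c < 1. Equivalently, every C² unit-speed curve γ : ℝ → ℝⁿ contained in the closed unit ball satisfies sup over t of ‖γ''(t)‖ ≥ 1. -/

import Mathlib

open Real

/-- No C² unit-speed curve `γ : ℝ → ℝⁿ` contained in the closed unit ball has its
curvature bounded by a constant `c < 1`: for every `c < 1` there is a parameter `t`
with `‖γ''(t)‖ > c`.  Equivalently, the supremum of the curvature of such a curve
is at least `1`. -/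
theorem curvature_of_curve_in_unit_ball {n : ℕ}
    (γ : ℝ → EuclideanSpace ℝ (Fin n))
    (hγ : ContDiff ℝ 2 γ)
    (hspeed : ∀ t : ℝ, ‖deriv γ t‖ = 1)
    (hball : ∀ t : ℝ, ‖γ t‖ ≤ 1) :
    ∀ c : ℝ, c < 1 → ∃ t : ℝ, c < ‖deriv (deriv γ) t‖ := by
  intro c hc
  by_contra hcon
  push_neg at hcon
  have hc0 : 0 ≤ c := le_trans (norm_nonneg _) (hcon 0)
  have hdγ : Differentiable ℝ γ := hγ.differentiable two_ne_zero
  have hγ' : ContDiff ℝ 1 (deriv γ) :=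
    (contDiff_succ_iff_deriv.mp (show ContDiff ℝ (1 + 1) γ by norm_num [hγ])).2.2
  have hdγ' : Differentiable ℝ (deriv γ) := hγ'.differentiable one_ne_zero
  -- φ t = ⟪γ t, γ t⟫, ψ t = 2⟪γ' t, γ t⟫
  set φ : ℝ → ℝ := fun t => inner ℝ (γ t) (γ t) with hφ
  set ψ : ℝ → ℝ := fun t => 2 * inner ℝ (deriv γ t) (γ t) with hψ
  have Hφ : ∀ t, HasDerivAt φ (ψ t) t := by
    intro t
    have := HasDerivAt.inner ℝ (hdγ t).hasDerivAt (hdγ t).hasDerivAt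
    refine this.congr_deriv ?_
    rw [real_inner_comm (deriv γ t) (γ t)]
    ring
  have Hψ : ∀ t, HasDerivAt ψ
      (2 * (inner ℝ (deriv (deriv γ) t) (γ t) + inner ℝ (deriv γ t) (deriv γ t))) t := by
    intro t
    have := HasDerivAt.inner ℝ (hdγ' t).hasDerivAt (hdγ t).hasDerivAt
    have h2 := this.const_mul (2 : ℝ)
    refine h2.congr_deriv ?_
    ring
  have hψ'lb : ∀ t, 2 * (1 - c) ≤
      2 * (inner ℝ (deriv (deriv γ) t) (γ t) + inner ℝ (deriv γ t) (deriv γ t)) := by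
    intro t
    have h1 : (inner ℝ (deriv γ t) (deriv γ t) : ℝ) = 1 := by
      rw [real_inner_self_eq_norm_sq, hspeed t]; norm_num
    have h2 : |(inner ℝ (deriv (deriv γ) t) (γ t) : ℝ)| ≤ c := by
      calc |(inner ℝ (deriv (deriv γ) t) (γ t) : ℝ)| ≤ ‖deriv (deriv γ) t‖ * ‖γ t‖ :=
            abs_real_inner_le_norm _ _
        _ ≤ c * 1 := by
            exact mul_le_mul (hcon t) (hball t) (norm_nonneg _)
              (le_trans (norm_nonneg _) (hcon t))
        _ = c := by ring
    have := neg_le_of_abs_le h2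
    nlinarith
  -- G t := ψ t - ψ 0 - 2(1-c) t is monotone, hence ≥ 0 for t ≥ 0
  have HG : ∀ t : ℝ, 0 ≤ t → ψ 0 + 2 * (1 - c) * t ≤ ψ t := by
    intro t ht
    have HGd : ∀ x : ℝ, HasDerivAt (fun t => ψ t - 2 * (1 - c) * t)
        (2 * (inner ℝ (deriv (deriv γ) x) (γ x) + inner ℝ (deriv γ x) (deriv γ x))
          - 2 * (1 - c)) x := by
      intro x
      have hlin : HasDerivAt (fun t : ℝ => 2 * (1 - c) * t) (2 * (1 - c)) x := by
        simpa using (hasDerivAt_id x).const_mul (2 * (1 - c))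
      exact (Hψ x).sub hlin
    have hmono : Monotone fun t => ψ t - 2 * (1 - c) * t := by
      apply monotone_of_deriv_nonneg
      · exact fun x => (HGd x).differentiableAt
      · intro x
        rw [(HGd x).deriv]
        have := hψ'lb x
        linarith
    have := hmono ht
    simp only at this
    linarith
  -- F t := φ t - ψ 0 * t - (1-c) t² is monotone on [0,∞)
  have HF : ∀ t : ℝ, 0 ≤ t → φ 0 + ψ 0 * t + (1 - c) * t ^ 2 ≤ φ t := by
    intro t ht
    have HFd : ∀ x : ℝ, HasDerivAt (fun t => φ t - ψ 0 * t - (1 - c) * t ^ 2)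
        (ψ x - ψ 0 - 2 * (1 - c) * x) x := by
      intro x
      have hlin : HasDerivAt (fun t : ℝ => ψ 0 * t) (ψ 0) x := by
        simpa using (hasDerivAt_id x).const_mul (ψ 0)
      have hsq : HasDerivAt (fun t : ℝ => (1 - c) * t ^ 2) (2 * (1 - c) * x) x := by
        have := (hasDerivAt_pow 2 x).const_mul (1 - c)
        refine this.congr_deriv ?_
        simp
        ring
      exact ((Hφ x).sub hlin).sub hsq
    have hmono : MonotoneOn (fun t => φ t - ψ 0 * t - (1 - c) * t ^ 2) (Set.Ici 0) := by
      apply monotoneOn_of_deriv_nonneg (convex_Ici 0)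
      · exact fun x _ => (HFd x).continuousAt.continuousWithinAt
      · exact fun x _ => (HFd x).differentiableAt.differentiableWithinAt
      · intro x hx
        rw [interior_Ici] at hx
        rw [(HFd x).deriv]
        have := HG x (le_of_lt hx)
        nlinarith
    have := hmono (Set.self_mem_Ici) (Set.mem_Ici.mpr ht) ht
    simp only at this
    nlinarith
  -- contradiction at large t
  set t₀ : ℝ := (|ψ 0| + 2) / (1 - c) with ht₀
  have h1c : 0 < 1 - c := by linarith
  have ht₀pos : 0 ≤ t₀ := by positivity
  have key := HF t₀ ht₀pos
  have hφ0 : 0 ≤ φ 0 := real_inner_self_nonneg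
  have hφt : φ t₀ ≤ 1 := by
    have : φ t₀ = ‖γ t₀‖ ^ 2 := real_inner_self_eq_norm_sq _
    rw [this]
    nlinarith [hball t₀, norm_nonneg (γ t₀)]
  have hψ0t : -(|ψ 0| * t₀) ≤ ψ 0 * t₀ := by
    nlinarith [neg_abs_le (ψ 0), abs_nonneg (ψ 0)]
  have hsq : (1 - c) * t₀ ^ 2 = (|ψ 0| + 2) * t₀ := by
    rw [ht₀]
    field_simp
  have ht₀2 : 2 ≤ t₀ := by
    rw [ht₀, le_div_iff₀ h1c]
    nlinarith [abs_nonneg (ψ 0)]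
  nlinarith [abs_nonneg (ψ 0)]
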